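/- Let L be a free abelian group with basis B, q a prime, x ∈ B, and let M = L ⊕ₓ ℤ[1/q] = ⟨L ∪ {x/qⁱ : i ≥ 1}⟩ inside ℚ ⊗ L. Then ⋂_{i=1}^∞ qⁱM = {(m/qⁱ)x : m ∈ ℤ, i ≥ 1} = x·ℤ[1/q]. -/

import Mathlib

noncomputable def zqSub {ι : Type*} (x₀ : ι) (q : ℕ) (hq0 : (q : ℚ) ≠ 0) :
    AddSubgroup (ι →₀ ℚ) where
  carrier := {v | (∀ j, j ≠ x₀ → ∃ n : ℤ, v j = n) ∧
    ∃ (m : ℤ) (k : ℕ), v x₀ = (m : ℚ) / (q : ℚ) ^ k}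
  zero_mem' := ⟨fun j _ => ⟨0, by simp⟩, 0, 0, by simp⟩
  add_mem' := by
    rintro a b ⟨ha1, m1, k1, ha2⟩ ⟨hb1, m2, k2, hb2⟩
    refine ⟨fun j hj => ?_, m1 * q ^ k2 + m2 * q ^ k1, k1 + k2, ?_⟩
    · obtain ⟨n1, h1⟩ := ha1 j hj
      obtain ⟨n2, h2⟩ := hb1 j hj
      exact ⟨n1 + n2, by simp [Finsupp.add_apply, h1, h2]⟩
    · simp only [Finsupp.add_apply, ha2, hb2]
      rw [div_add_div _ _ (pow_ne_zero k1 hq0) (pow_ne_zero k2 hq0), pow_add]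
      push_cast
      ring_nf
  neg_mem' := by
    rintro a ⟨ha1, m, k, ha2⟩
    refine ⟨fun j hj => ?_, -m, k, ?_⟩
    · obtain ⟨n, h⟩ := ha1 j hj
      exact ⟨-n, by simp [h]⟩
    · simp [Finsupp.neg_apply, ha2]
      ring

theorem inter_qpow_eq_x_zInvPow
    {ι : Type*} (x₀ : ι) (q : ℕ) (hq : q.Prime)
    (L : AddSubgroup (ι →₀ ℚ))
    (hL : L = AddSubgroup.closure (Set.range fun i : ι => Finsupp.single i (1 : ℚ)))
    (M : AddSubgroup (ι →₀ ℚ))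
    (hM : M = AddSubgroup.closure
      (↑L ∪ {y | ∃ i : ℕ, 1 ≤ i ∧ y = ((q : ℚ) ^ i)⁻¹ • Finsupp.single x₀ (1 : ℚ)})) :
    {v : ι →₀ ℚ | ∀ i : ℕ, 1 ≤ i → ∃ w ∈ M, v = ((q : ℚ) ^ i) • w} =
      {v | ∃ (m : ℤ) (i : ℕ), 1 ≤ i ∧
        v = ((m : ℚ) / (q : ℚ) ^ i) • Finsupp.single x₀ (1 : ℚ)} := by
  have hq0 : (q : ℚ) ≠ 0 := Nat.cast_ne_zero.mpr hq.ne_zero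
  -- M ≤ zqSub
  have hsingle : ∀ i : ι, Finsupp.single i (1 : ℚ) ∈ zqSub x₀ q hq0 := by
    intro i
    constructor
    · intro j hj
      by_cases h : i = j
      · exact ⟨1, by simp [h]⟩
      · exact ⟨0, by simp [Finsupp.single_apply, h]⟩
    · by_cases h : i = x₀
      · exact ⟨1, 0, by simp [h]⟩
      · exact ⟨0, 0, by simp [Finsupp.single_apply, h]⟩
  have hMS : M ≤ zqSub x₀ q hq0 := by
    rw [hM]
    apply AddSubgroup.closure_le _ |>.mpr
    rintro y (hy | ⟨i, hi, rfl⟩)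
    · have : L ≤ zqSub x₀ q hq0 := by
        rw [hL]
        apply AddSubgroup.closure_le _ |>.mpr
        rintro z ⟨i, rfl⟩
        exact hsingle i
      exact this hy
    · constructor
      · intro j hj
        refine ⟨0, ?_⟩
        simp [Finsupp.single_apply, Ne.symm hj]
      · refine ⟨1, i, ?_⟩
        simp [Finsupp.single_apply, one_div]
  ext v
  simp only [Set.mem_setOf_eq]
  constructor
  · intro h
    -- coordinates away from x₀ vanish
    obtain ⟨w₁, hw₁M, hv₁⟩ := h 1 le_rfl
    obtain ⟨hw₁int, m₁, k₁, hw₁x⟩ := hMS hw₁M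
    have hcoord : ∀ j, j ≠ x₀ → v j = 0 := by
      intro j hj
      obtain ⟨n₁, hn₁⟩ := hw₁int j hj
      have hvj : v j = ((q * n₁ : ℤ) : ℚ) := by
        rw [hv₁, Finsupp.smul_apply, hn₁, smul_eq_mul]; push_cast; ring
      by_contra hne
      have hn0 : (q * n₁ : ℤ) ≠ 0 := by
        intro h0; apply hne; rw [hvj, h0]; simp
      set N : ℤ := q * n₁ with hN
      -- q^i divides N for all i
      have hdvd : ∀ i : ℕ, 1 ≤ i → (q : ℤ) ^ i ∣ N := by
        intro i hi
        obtain ⟨w, hwM, hv⟩ := h i hi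
        obtain ⟨hwint, _⟩ := hMS hwM
        obtain ⟨n, hn⟩ := hwint j hj
        refine ⟨n, ?_⟩
        have : (N : ℚ) = (q : ℚ) ^ i * n := by
          rw [← hvj, hv]; simp [Finsupp.smul_apply, hn]
        exact_mod_cast this
      have h2 : 2 ≤ q := hq.two_le
      have hk := hdvd N.natAbs (by omega)
      have h3 : q ^ N.natAbs ∣ N.natAbs := by
        have := Int.natAbs_dvd_natAbs.mpr hk
        simpa [Int.natAbs_pow] using this
      have h4 : q ^ N.natAbs ≤ N.natAbs := Nat.le_of_dvd (by omega) h3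
      have h5 : N.natAbs < 2 ^ N.natAbs := Nat.lt_two_pow_self
      have h6 : 2 ^ N.natAbs ≤ q ^ N.natAbs := Nat.pow_le_pow_left h2 _
      omega
    -- value at x₀
    have hx : v x₀ = ((q * m₁ * q : ℤ) : ℚ) / (q : ℚ) ^ (k₁ + 1) := by
      rw [hv₁]
      simp [Finsupp.smul_apply, hw₁x]
      field_simp
      ring
    refine ⟨q * m₁ * q, k₁ + 1, by omega, ?_⟩
    ext j
    by_cases hj : j = x₀
    · subst hj
      rw [hx]
      simp [Finsupp.smul_apply, Finsupp.single_apply]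
    · rw [hcoord j hj]
      simp [Finsupp.smul_apply, Finsupp.single_apply, Ne.symm hj]
  · rintro ⟨m, i, hi, rfl⟩
    intro j hj
    refine ⟨((m : ℚ) / (q : ℚ) ^ (i + j)) • Finsupp.single x₀ (1 : ℚ), ?_, ?_⟩
    · have hgen : ((q : ℚ) ^ (i + j))⁻¹ • Finsupp.single x₀ (1 : ℚ) ∈ M := by
        rw [hM]
        exact AddSubgroup.subset_closure (Or.inr ⟨i + j, by omega, rfl⟩)
      have := AddSubgroup.zsmul_mem _ hgen m
      convert this using 1
      rw [← smul_assoc]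
      congr 1
    · rw [smul_smul]
      congr 1
      rw [pow_add]
      field_simp
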